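/- Let A be a unital C*-algebra, and let t, x ∈ A with tx = xt and x = tz - zt for some z ∈ A. If x is self-adjoint and positive (x ≥ 0), then x = 0. -/

import Mathlib

section Aux

variable {A : Type*} [Ring A] (t z x : A)

private def innerDer (t : A) : A → A := fun a => t * a - a * t

private lemma innerDer_add (a b : A) : innerDer t (a + b) = innerDer t a + innerDer t b := by
  simp only [innerDer]; noncomm_ring

private lemma innerDer_iter_add (k : ℕ) (a b : A) :
    (innerDer t)^[k] (a + b) = (innerDer t)^[k] a + (innerDer t)^[k] b := by
  induction k generalizing a b with
  | zero => simp
  | succ k ih => simp only [Function.iterate_succ_apply, innerDer_add, ih]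

private lemma innerDer_iter_zero (k : ℕ) : (innerDer t)^[k] (0 : A) = 0 := by
  induction k with
  | zero => simp
  | succ k ih => simp only [Function.iterate_succ_apply, innerDer, mul_zero, zero_mul, sub_zero, ih]

variable (hcomm : t * x = x * t)

private lemma innerDer_iter_mulx (hcomm : t * x = x * t) (k : ℕ) (a : A) :
    (innerDer t)^[k] (x * a) = x * (innerDer t)^[k] a := by
  induction k generalizing a with
  | zero => simp
  | succ k ih =>
    rw [Function.iterate_succ_apply, Function.iterate_succ_apply]
    have : innerDer t (x * a) = x * innerDer t a := by
      simp only [innerDer]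
      rw [← mul_assoc, hcomm, mul_sub, mul_assoc, mul_assoc]
    rw [this, ih]

private lemma innerDer_mulz (hran : x = t * z - z * t) (a : A) :
    innerDer t (z * a) = x * a + z * innerDer t a := by
  simp only [innerDer]; rw [hran]; noncomm_ring

private lemma innerDer_iter_mulz (hcomm : t * x = x * t) (hran : x = t * z - z * t)
    (k : ℕ) (a : A) :
    (innerDer t)^[k + 1] (z * a) =
      z * (innerDer t)^[k + 1] a + (k + 1) • (x * (innerDer t)^[k] a) := by
  induction k generalizing a with
  | zero => simp [Function.iterate_succ_apply, innerDer_mulz t z x hran, add_comm]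
  | succ k ih =>
    rw [show (innerDer t)^[k + 1 + 1] (z * a) = (innerDer t)^[k + 1] (innerDer t (z * a)) from
        Function.iterate_succ_apply _ _ _,
      innerDer_mulz t z x hran, innerDer_iter_add, ih, innerDer_iter_mulx t x hcomm,
      ← Function.iterate_succ_apply, ← Function.iterate_succ_apply]
    conv_rhs => rw [succ_nsmul]
    abel

private lemma innerDer_iter_pow (hcomm : t * x = x * t) (hran : x = t * z - z * t) (n : ℕ) :
    (innerDer t)^[n] (z ^ n) = n.factorial • x ^ n ∧
      ∀ k, n < k → (innerDer t)^[k] (z ^ n) = 0 := by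
  induction n with
  | zero =>
    refine ⟨by simp, fun k hk => ?_⟩
    obtain ⟨j, rfl⟩ := Nat.exists_eq_add_of_lt hk
    rw [pow_zero, Nat.zero_add, Function.iterate_succ_apply]
    have h1 : innerDer t (1 : A) = 0 := by simp [innerDer]
    rw [h1, innerDer_iter_zero]
  | succ n ih =>
    obtain ⟨ih1, ih2⟩ := ih
    constructor
    · rw [pow_succ', innerDer_iter_mulz t z x hcomm hran, ih2 _ (Nat.lt_succ_self n), ih1,
        mul_zero, zero_add, mul_smul_comm, ← pow_succ', smul_smul, Nat.factorial_succ]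
    · intro k hk
      obtain ⟨m, rfl⟩ : ∃ m, k = m + 1 := ⟨k - 1, by omega⟩
      rw [pow_succ', innerDer_iter_mulz t z x hcomm hran, ih2 _ (by omega), ih2 _ (by omega),
        mul_zero, mul_zero, smul_zero, add_zero]

end Aux

section NormAux

variable {A : Type*} [NormedRing A] (t : A)

private lemma innerDer_norm_le (a : A) : ‖innerDer t a‖ ≤ 2 * ‖t‖ * ‖a‖ := by
  calc ‖t * a - a * t‖ ≤ ‖t * a‖ + ‖a * t‖ := norm_sub_le _ _
    _ ≤ ‖t‖ * ‖a‖ + ‖a‖ * ‖t‖ := add_le_add (norm_mul_le _ _) (norm_mul_le _ _)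
    _ = 2 * ‖t‖ * ‖a‖ := by ring

private lemma innerDer_iter_norm_le (n : ℕ) (a : A) :
    ‖(innerDer t)^[n] a‖ ≤ (2 * ‖t‖) ^ n * ‖a‖ := by
  induction n generalizing a with
  | zero => simp
  | succ n ih =>
    rw [Function.iterate_succ_apply]
    calc ‖(innerDer t)^[n] (innerDer t a)‖ ≤ (2 * ‖t‖) ^ n * ‖innerDer t a‖ := ih _
      _ ≤ (2 * ‖t‖) ^ n * (2 * ‖t‖ * ‖a‖) := by
          exact mul_le_mul_of_nonneg_left (innerDer_norm_le t a)
            (pow_nonneg (by positivity) n)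
      _ = (2 * ‖t‖) ^ (n + 1) * ‖a‖ := by ring

end NormAux

/-- In a unital C*-algebra, a positive element commuting with `t` and lying in the
range of the inner derivation `a ↦ ta - at` is zero. -/
theorem positive_commutator_range_eq_zero
    {A : Type*} [NormedRing A] [StarRing A] [CStarRing A] [NormedAlgebra ℂ A]
    [CompleteSpace A] [StarModule ℂ A] [PartialOrder A] [StarOrderedRing A]
    (t x z : A) (hcomm : t * x = x * t) (hran : x = t * z - z * t)
    (hsa : IsSelfAdjoint x) (hpos : 0 ≤ x) :
    x = 0 := by
  -- the key norm bound : n ! * ‖x‖^(2^k) ≤ (2‖t‖‖z‖)^n for n = 2^k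
  set C : ℝ := 2 * ‖t‖ * ‖z‖ with hC
  have hCnn : 0 ≤ C := by positivity
  have key : ∀ n : ℕ, 0 < n → (n.factorial : ℝ) * ‖x ^ n‖ ≤ C ^ n := by
    intro n hn
    have h1 : (innerDer t)^[n] (z ^ n) = n.factorial • x ^ n :=
      (innerDer_iter_pow t z x hcomm hran n).1
    have h2 : ‖(innerDer t)^[n] (z ^ n)‖ ≤ (2 * ‖t‖) ^ n * ‖z ^ n‖ :=
      innerDer_iter_norm_le t n (z ^ n)
    rw [h1] at h2
    have h3 : ‖(n.factorial : ℕ) • x ^ n‖ = (n.factorial : ℝ) * ‖x ^ n‖ := by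
      rw [← Nat.cast_smul_eq_nsmul ℝ, norm_smul]
      simp
    rw [h3] at h2
    calc (n.factorial : ℝ) * ‖x ^ n‖ ≤ (2 * ‖t‖) ^ n * ‖z ^ n‖ := h2
      _ ≤ (2 * ‖t‖) ^ n * ‖z‖ ^ n :=
          mul_le_mul_of_nonneg_left (norm_pow_le' z hn) (pow_nonneg (by positivity) n)
      _ = C ^ n := by rw [hC]; ring
  -- use self-adjointness to convert to ‖x‖ ^ (2 ^ k)
  have key2 : ∀ k : ℕ, ((2 ^ k).factorial : ℝ) * ‖x‖ ^ (2 ^ k) ≤ C ^ (2 ^ k) := by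
    intro k
    have h := key (2 ^ k) (Nat.pow_pos (n := k) (by norm_num))
    have hnorm : ‖x ^ 2 ^ k‖ = ‖x‖ ^ 2 ^ k := by
      simpa using congrArg NNReal.toReal (hsa.nnnorm_pow_two_pow k)
    rwa [hnorm] at h
  -- conclude ‖x‖ = 0
  by_contra hx
  have hr : 0 < ‖x‖ := norm_pos_iff.mpr hx
  set r := ‖x‖ with hrr
  have hgeq : ∀ k : ℕ, 1 ≤ (C / r) ^ (2 ^ k) / ((2 ^ k).factorial : ℝ) := by
    intro k
    have h := key2 k
    have hfac : (0:ℝ) < ((2 ^ k).factorial : ℝ) := by exact_mod_cast Nat.factorial_pos _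
    have hrp : (0:ℝ) < r ^ (2 ^ k) := pow_pos hr _
    rw [le_div_iff₀ hfac, one_mul, div_pow, le_div_iff₀ hrp]
    linarith [h]
  have htend : Filter.Tendsto (fun k : ℕ => (C / r) ^ (2 ^ k) / ((2 ^ k).factorial : ℝ))
      Filter.atTop (nhds 0) := by
    have h1 : Filter.Tendsto (fun n : ℕ => (C / r) ^ n / (n.factorial : ℝ))
        Filter.atTop (nhds 0) := FloorSemiring.tendsto_pow_div_factorial_atTop (C / r)
    have h2 : Filter.Tendsto (fun k : ℕ => 2 ^ k) Filter.atTop Filter.atTop :=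
      tendsto_pow_atTop_atTop_of_one_lt (by norm_num)
    exact h1.comp h2
  have := (htend.eventually (gt_mem_nhds (by norm_num : (0:ℝ) < 1))).exists
  obtain ⟨k, hk⟩ := this
  exact absurd (hgeq k) (not_le.mpr hk)
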